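/- arXiv:1506.01483 — 3 statements merged into one kernel-verified Lean document; each statement's English description precedes it below -/
import Mathlib

section
/- Let Γ_a be a vertex-weighted graph and let p(Γ_a) be its polarization, the simple graph on vertices i_r (i ∈ V, 1 ≤ r ≤ a_i) where {i_r, j_s} is an edge iff {i,j} is an edge of Γ. Then ν(Γ_a) = ν(p(Γ_a)), i.e., the weighted matching number of Γ_a equals the (ordinary) matching number of its polarization. -/
open MvPolynomial

section Defs

variable {V : Type*}

/-- A matching of the vertex-weighted graph `Γ_a`: a multiset of (oriented) edges of `G`
in which every vertex `i` appears at most `a i` times. -/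
def IsWMatching [DecidableEq V] (G : SimpleGraph V) (a : V → ℕ)
    (M : Multiset (V × V)) : Prop :=
  (∀ e ∈ M, G.Adj e.1 e.2) ∧
    ∀ i : V, (M.map Prod.fst).count i + (M.map Prod.snd).count i ≤ a i

/-- The matching number `ν(Γ_a)` of the vertex-weighted graph `Γ_a`. -/
noncomputable def wNu [DecidableEq V] (G : SimpleGraph V) (a : V → ℕ) : ℕ :=
  sSup {k : ℕ | ∃ M : Multiset (V × V), IsWMatching G a M ∧ Multiset.card M = k}

/-- A perfect matching of `Γ_a`: every vertex `i` appears exactly `a i` times. -/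
def IsWPerfectMatching [DecidableEq V] (G : SimpleGraph V) (a : V → ℕ)
    (M : Multiset (V × V)) : Prop :=
  (∀ e ∈ M, G.Adj e.1 e.2) ∧
    ∀ i : V, (M.map Prod.fst).count i + (M.map Prod.snd).count i = a i

/-- `Γ_a` is matching-critical: lowering the weight of any supported vertex
does not decrease the matching number. -/
def MatchingCritical [DecidableEq V] (G : SimpleGraph V) (a : V → ℕ) : Prop :=
  ∀ i : V, a i ≠ 0 → wNu G (a - Pi.single i 1) = wNu G a

/-- The polarization `p(Γ_a)`: each vertex `i` is replaced by `a i` copies. -/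
def polarization (G : SimpleGraph V) (a : V → ℕ) :
    SimpleGraph (Σ i : V, Fin (a i)) where
  Adj u v := G.Adj u.1 v.1
  symm := ⟨fun _ _ h => G.adj_symm h⟩
  loopless := ⟨fun u h => G.irrefl h⟩

/-- The base graph of `Γ_a` as a spanning subgraph of `G`: edges of `G` between
supported vertices (vertices of weight `0` become isolated). -/
def baseGraph (G : SimpleGraph V) (a : V → ℕ) : SimpleGraph V where
  Adj i j := G.Adj i j ∧ a i ≠ 0 ∧ a j ≠ 0
  symm := ⟨fun _ _ h => ⟨h.1.symm, h.2.2, h.2.1⟩⟩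
  loopless := ⟨fun _ h => G.irrefl h.1⟩

/-- An ear: a walk with endpoints `u`, `v` and list of inner vertices `inner`. -/
structure PreEar (V : Type*) where
  u : V
  inner : List V
  v : V

namespace PreEar

/-- The length of an ear. -/
def len (E : PreEar V) : ℕ := E.inner.length + 1

/-- The vertex list of an ear. -/
def verts (E : PreEar V) : List V := E.u :: (E.inner ++ [E.v])

/-- The ear is a walk in `G`. -/
def IsWalk (G : SimpleGraph V) (E : PreEar V) : Prop := List.Chain' G.Adj E.verts

end PreEar

/-- Endpoints of each subsequent ear belong to earlier ears
(`S` accumulates the vertices seen so far). -/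
def earsOk (G : SimpleGraph V) : List (PreEar V) → List V → Prop
  | [], _ => True
  | E :: rest, S => E.u ∈ S ∧ E.v ∈ S ∧ earsOk G rest (S ++ E.verts)

/-- The number of appearances of `i` in an ear decomposition, not as an endpoint of
the subsequent ears. -/
def earCount [DecidableEq V] (i : V) : List (PreEar V) → ℕ
  | [] => 0
  | E0 :: rest => (E0.u :: E0.inner).count i + (rest.map fun E => E.inner.count i).sum

/-- The number of even ears of an ear decomposition. -/
def evenEars (D : List (PreEar V)) : ℕ :=
  D.countP fun E => E.inner.length % 2 == 1

/-- An ear decomposition starting with an odd closed walk. -/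
def IsInitOddDecomp (G : SimpleGraph V) (D : List (PreEar V)) : Prop :=
  ∃ E0 rest, D = E0 :: rest ∧ E0.u = E0.v ∧ Odd E0.len ∧
    (∀ E ∈ D, E.IsWalk G) ∧ earsOk G rest E0.verts

/-- A family of initially odd ear decompositions of the connected components of the
weighted graph `Γ_a`: each member is an initially odd ear decomposition, every vertex `i`
appears exactly `a i` times (not as an endpoint of subsequent ears), and different members
lie in different connected components of the base graph. -/
def IsInitOddFamily [DecidableEq V] (G : SimpleGraph V) (a : V → ℕ)
    (L : List (List (PreEar V))) : Prop :=
  (∀ D ∈ L, IsInitOddDecomp G D) ∧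
  (∀ i : V, a i = (L.map (earCount i)).sum) ∧
  L.Pairwise (fun D1 D2 =>
    ∀ x y : V, (∃ E ∈ D1, x ∈ E.verts) → (∃ E ∈ D2, y ∈ E.verts) →
      ¬ (baseGraph G a).Reachable x y)

/-- `φ*(Γ_a)`: the minimal total number of even ears in families of initially odd
ear decompositions of the connected components. -/
noncomputable def phiStar [DecidableEq V] (G : SimpleGraph V) (a : V → ℕ) : ℕ :=
  sInf {k : ℕ | ∃ L, IsInitOddFamily G a L ∧ (L.map evenEars).sum = k}

/-- `μ*(Γ) = (φ*(Γ) + n - c) / 2`, where `n` is the number of vertices and `c` the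
number of connected components. -/
noncomputable def muStar [DecidableEq V] (G : SimpleGraph V) : ℕ :=
  (phiStar G (fun _ => 1) + Nat.card V - Nat.card G.ConnectedComponent) / 2

/-- Every connected component of `G` contains an odd cycle (equivalently, an odd
closed walk), i.e. every connected component is non-bipartite. -/
def StronglyNonBip (G : SimpleGraph V) : Prop :=
  ∀ v : V, ∃ u, G.Reachable v u ∧ ∃ p : G.Walk u u, Odd p.length

/-- `G` is non-bipartite: it contains an odd closed walk. -/
def NonBip (G : SimpleGraph V) : Prop :=
  ∃ (u : V) (p : G.Walk u u), Odd p.length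

/-- A vertex cover of `G`. -/
def IsCover (G : SimpleGraph V) (F : Set V) : Prop :=
  ∀ ⦃i j : V⦄, G.Adj i j → i ∈ F ∨ j ∈ F

/-- The closed neighborhood `N[U]`. -/
def closedNbhd (G : SimpleGraph V) (U : Set V) : Set V :=
  {v | v ∈ U ∨ ∃ u ∈ U, G.Adj v u}

/-- The core `c(F) = F \ N[V \ F]` of a cover `F`. -/
def core (G : SimpleGraph V) (F : Set V) : Set V :=
  {i ∈ F | ∀ j, G.Adj i j → j ∈ F}

/-- `U` is a dominating set of `G`: `N[U] = V`. -/
def IsDominating (G : SimpleGraph V) (U : Set V) : Prop :=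
  ∀ v : V, v ∈ U ∨ ∃ u ∈ U, G.Adj v u

/-- The edge ideal of a graph `G` in the polynomial ring over `k`. -/
noncomputable def edgeIdeal (k : Type*) [Field k] (G : SimpleGraph V) :
    Ideal (MvPolynomial V k) :=
  Ideal.span {p | ∃ i j : V, G.Adj i j ∧ p = X i * X j}

/-- The maximal homogeneous ideal `(x_1, ..., x_n)`. -/
noncomputable def maxIdeal (k : Type*) [Field k] (V : Type*) :
    Ideal (MvPolynomial V k) :=
  Ideal.span (Set.range (X : V → MvPolynomial V k))

/-- The monomial `x^a = x_1^{a_1} ⋯ x_n^{a_n}`. -/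
noncomputable def monA (k : Type*) [Field k] [Fintype V] (a : V → ℕ) :
    MvPolynomial V k :=
  ∏ i : V, X i ^ a i

/-- A connected minimal `s`-base: a connected non-bipartite graph with `μ* = s`
containing no proper spanning subgraph which is connected non-bipartite with `μ* = s`. -/
def ConnMinBase [DecidableEq V] (G : SimpleGraph V) (s : ℕ) : Prop :=
  G.Connected ∧ NonBip G ∧ muStar G = s ∧
    ∀ H : SimpleGraph V, H ≤ G → H ≠ G →
      ¬ (H.Connected ∧ NonBip H ∧ muStar H = s)

open Classical in
/-- The restriction of the weight `a` to the connected component of `i`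
in the base graph of `Γ_a`. -/
noncomputable def compWeight [DecidableEq V] (G : SimpleGraph V) (a : V → ℕ) (i : V) :
    V → ℕ :=
  fun j => if (baseGraph G a).Reachable i j then a j else 0

end Defs

section Aux

variable {V : Type*} [DecidableEq V]

private lemma countP_sigma_fiber {a : V → ℕ} {α : Type*}
    (g : α → Σ i : V, Fin (a i)) (i : V) (s : Multiset α) :
    s.countP (fun x => (g x).1 = i) = ∑ r : Fin (a i), s.countP (fun x => g x = ⟨i, r⟩) := by
  induction s using Multiset.induction_on with
  | empty => simp
  | cons x s ih =>
    simp only [Multiset.countP_cons, ih, Finset.sum_add_distrib]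
    congr 1
    rcases hgx : g x with ⟨i', r0⟩
    by_cases h : i' = i
    · subst h
      simp [hgx, Sigma.mk.inj_iff, Finset.sum_ite_eq]
    · simp [hgx, Sigma.mk.inj_iff, h]

private lemma count_map_eq_countP {α β : Type*} [DecidableEq β] (f : α → β) (b : β)
    (s : Multiset α) : (s.map f).count b = s.countP (fun x => f x = b) := by
  rw [Multiset.count_map, Multiset.countP_eq_card_filter]
  congr 1
  exact Multiset.filter_congr (fun x _ => eq_comm)

/-- the "used-count" of a vertex in a multiset of oriented edges -/
private def cnt {W : Type*} [DecidableEq W] (M : Multiset (W × W)) (i : W) : ℕ :=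
  (M.map Prod.fst).count i + (M.map Prod.snd).count i

private lemma cnt_fiber {a : V → ℕ} (N : Multiset ((Σ i : V, Fin (a i)) × (Σ i : V, Fin (a i))))
    (i : V) : cnt (N.map fun e => (e.1.1, e.2.1)) i = ∑ r : Fin (a i), cnt N ⟨i, r⟩ := by
  simp only [cnt, count_map_eq_countP, Multiset.countP_map, Finset.sum_add_distrib]
  have h1 := countP_sigma_fiber (fun e : (Σ i : V, Fin (a i)) × (Σ i : V, Fin (a i)) => e.1) i N
  have h2 := countP_sigma_fiber (fun e : (Σ i : V, Fin (a i)) × (Σ i : V, Fin (a i)) => e.2) i N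
  rw [← Multiset.countP_eq_card_filter, ← Multiset.countP_eq_card_filter, h1, h2]

private lemma cnt_cons {W : Type*} [DecidableEq W] (e : W × W) (M : Multiset (W × W)) (i : W) :
    cnt (e ::ₘ M) i = cnt M i + (if i = e.1 then 1 else 0) + (if i = e.2 then 1 else 0) := by
  simp only [cnt, Multiset.map_cons, Multiset.count_cons]
  omega

/-- lifting a weighted matching to a matching of the polarization -/
private lemma lift_matching (G : SimpleGraph V) (a : V → ℕ) (M : Multiset (V × V))
    (hM : IsWMatching G a M) :
    ∃ N : Multiset ((Σ i : V, Fin (a i)) × (Σ i : V, Fin (a i))),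
      N.map (fun e => (e.1.1, e.2.1)) = M ∧
        IsWMatching (polarization G a) (fun _ => 1) N := by
  induction M using Multiset.induction_on with
  | empty => exact ⟨0, by simp, by simp [IsWMatching]⟩
  | cons e M ih =>
    obtain ⟨hadj, hcnt⟩ := hM
    have hM' : IsWMatching G a M := by
      refine ⟨fun f hf => hadj f (Multiset.mem_cons_of_mem hf), fun i => ?_⟩
      have := hcnt i
      have := cnt_cons e M i
      simp only [cnt] at this
      omega
    obtain ⟨N, hNmap, hNadj, hNcnt⟩ := ih hM'
    have hadje : G.Adj e.1 e.2 := hadj e (Multiset.mem_cons_self e M)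
    have hne : e.1 ≠ e.2 := hadje.ne
    -- find an unused copy of a vertex
    have key : ∀ v : V, e.1 = v ∨ e.2 = v → ∃ r : Fin (a v), cnt N ⟨v, r⟩ = 0 := by
      intro v hv
      by_contra hall
      push_neg at hall
      have hge : ∀ r : Fin (a v), 1 ≤ cnt N ⟨v, r⟩ := fun r =>
        Nat.one_le_iff_ne_zero.mpr (hall r)
      have hsum : a v ≤ ∑ r : Fin (a v), cnt N ⟨v, r⟩ := by
        calc a v = ∑ _r : Fin (a v), 1 := by simp
        _ ≤ _ := Finset.sum_le_sum (fun r _ => hge r)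
      rw [← cnt_fiber, hNmap] at hsum
      have h1 := hcnt v
      simp only [cnt] at hsum
      rcases hv with hv | hv <;>
        simp only [hv, Multiset.map_cons, Multiset.count_cons, if_true, reduceIte] at h1 <;> omega
    obtain ⟨r, hr⟩ := key e.1 (Or.inl rfl)
    obtain ⟨s, hs⟩ := key e.2 (Or.inr rfl)
    refine ⟨(⟨e.1, r⟩, ⟨e.2, s⟩) ::ₘ N, by simp [hNmap], ?_, ?_⟩
    · intro f hf
      rcases Multiset.mem_cons.mp hf with hf | hf
      · subst hf; exact hadje
      · exact hNadj f hf
    · intro u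
      have hcc := cnt_cons (⟨e.1, r⟩, ⟨e.2, s⟩) N u
      simp only [cnt] at hcc ⊢
      have hnee : (⟨e.1, r⟩ : Σ i : V, Fin (a i)) ≠ ⟨e.2, s⟩ := by
        intro h; exact hne (congrArg Sigma.fst h)
      by_cases h1 : u = (⟨e.1, r⟩ : Σ i : V, Fin (a i))
      · subst h1
        simp only [cnt] at hr
        rw [hcc]
        simp [hnee, hr]
      · by_cases h2 : u = (⟨e.2, s⟩ : Σ i : V, Fin (a i))
        · subst h2
          simp only [cnt] at hs
          rw [hcc]
          simp [Ne.symm hnee, hs]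
        · have := hNcnt u
          simp only at this
          rw [hcc]
          simp only [h1, h2, if_false]
          omega

/-- projecting a matching of the polarization to a weighted matching -/
private lemma proj_matching (G : SimpleGraph V) (a : V → ℕ)
    (N : Multiset ((Σ i : V, Fin (a i)) × (Σ i : V, Fin (a i))))
    (hN : IsWMatching (polarization G a) (fun _ => 1) N) :
    IsWMatching G a (N.map fun e => (e.1.1, e.2.1)) := by
  obtain ⟨hadj, hcnt⟩ := hN
  constructor
  · intro f hf
    obtain ⟨e, he, rfl⟩ := Multiset.mem_map.mp hf
    exact hadj e he
  · intro i
    have h := cnt_fiber N i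
    simp only [cnt] at h
    rw [h]
    calc ∑ r : Fin (a i), ((N.map Prod.fst).count ⟨i, r⟩ + (N.map Prod.snd).count ⟨i, r⟩)
        ≤ ∑ _r : Fin (a i), 1 := Finset.sum_le_sum (fun r _ => hcnt ⟨i, r⟩)
      _ = a i := by simp

end Aux
/-- `ν(Γ_a) = ν(p(Γ_a))`. -/
theorem stmt_1 {V : Type*} [DecidableEq V] (G : SimpleGraph V) (a : V → ℕ) :
    wNu G a = wNu (polarization G a) (fun _ => 1) := by
  unfold wNu
  congr 1
  ext k
  constructor
  · rintro ⟨M, hM, rfl⟩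
    obtain ⟨N, hNmap, hN⟩ := lift_matching G a M hM
    exact ⟨N, hN, by rw [← hNmap, Multiset.card_map]⟩
  · rintro ⟨N, hN, rfl⟩
    exact ⟨N.map fun e => (e.1.1, e.2.1), proj_matching G a N hN, Multiset.card_map _ _⟩
end

section
/- Suppose a ∈ ℕ^n is such that V(a) is a dominating set of Γ, the weighted graph Γ_a has no isolated vertices, and ν(Γ_{a−e_i}) = ν(Γ_a) = t − 1 for all i ∈ V(a). Then x^a ∈ (I^t : m) \ I^t; in particular, m is an associated prime of I^t. -/
open MvPolynomial

section Aux

open Pointwise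

variable {k : Type*} [Field k] {n : ℕ}

/-- The exponent finsupp of a multiset of edges. -/
noncomputable def cntF (M : Multiset (Fin n × Fin n)) : Fin n →₀ ℕ :=
  (M.map fun e => Finsupp.single e.1 1 + Finsupp.single e.2 1).sum

lemma cntF_zero : cntF (0 : Multiset (Fin n × Fin n)) = 0 := rfl

lemma cntF_cons (e : Fin n × Fin n) (M : Multiset (Fin n × Fin n)) :
    cntF (e ::ₘ M) = Finsupp.single e.1 1 + Finsupp.single e.2 1 + cntF M := by
  simp [cntF]

lemma cntF_apply (M : Multiset (Fin n × Fin n)) (i : Fin n) :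
    cntF M i = (M.map Prod.fst).count i + (M.map Prod.snd).count i := by
  induction M using Multiset.induction_on with
  | empty => simp [cntF]
  | cons e M ih =>
    have flip : ∀ x y : Fin n, (if x = y then (1 : ℕ) else 0) = if y = x then 1 else 0 := by
      intro x y
      by_cases h : x = y <;> simp [h, eq_comm]
    simp only [cntF_cons, Finsupp.add_apply, Multiset.map_cons, Multiset.count_cons, ih,
      Finsupp.single_apply]
    rw [flip e.1 i, flip e.2 i]
    omega

lemma monA_eq (a : Fin n → ℕ) :
    monA k a = MvPolynomial.monomial (Finsupp.equivFunOnFinite.symm a) (1 : k) := by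
  rw [monA, ← MvPolynomial.prod_X_pow_eq_monomial,
    Finset.prod_subset (s₁ := (Finsupp.equivFunOnFinite.symm a).support) (Finset.subset_univ _)
      (fun x _ hx => by rw [Finsupp.notMem_support_iff.mp hx, pow_zero])]
  exact Finset.prod_congr rfl fun x _ => by rw [Finsupp.coe_equivFunOnFinite_symm]

lemma X_mul_X (i j : Fin n) :
    (X i : MvPolynomial (Fin n) k) * X j =
      MvPolynomial.monomial (Finsupp.single i 1 + Finsupp.single j 1) 1 := by
  rw [← pow_one (X i), ← pow_one (X j), MvPolynomial.X_pow_eq_monomial,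
    MvPolynomial.X_pow_eq_monomial, MvPolynomial.monomial_mul, one_mul]

lemma prod_eq_monomial (M : Multiset (Fin n × Fin n)) :
    (M.map fun e => (X e.1 * X e.2 : MvPolynomial (Fin n) k)).prod =
      MvPolynomial.monomial (cntF M) 1 := by
  induction M using Multiset.induction_on with
  | empty => simp [cntF_zero]
  | cons e M ih =>
    rw [Multiset.map_cons, Multiset.prod_cons, ih, cntF_cons, X_mul_X,
      MvPolynomial.monomial_mul, one_mul]

lemma prod_mem_pow (G : SimpleGraph (Fin n)) (M : Multiset (Fin n × Fin n)) :
    (∀ e ∈ M, G.Adj e.1 e.2) →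
    (M.map fun e => (X e.1 * X e.2 : MvPolynomial (Fin n) k)).prod ∈
      (edgeIdeal k G) ^ (Multiset.card M) := by
  induction M using Multiset.induction_on with
  | empty => intro _; simp
  | cons e M ih =>
    intro hadj
    rw [Multiset.map_cons, Multiset.prod_cons, Multiset.card_cons, pow_succ']
    refine Ideal.mul_mem_mul ?_ (ih fun e' he' => hadj e' (Multiset.mem_cons_of_mem he'))
    exact Ideal.subset_span ⟨e.1, e.2, hadj e (Multiset.mem_cons_self _ _), rfl⟩

/-- The exponents of generators of `I^t`. -/
def edgeD (G : SimpleGraph (Fin n)) (t : ℕ) : Set (Fin n →₀ ℕ) :=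
  {d | ∃ M : Multiset (Fin n × Fin n),
    (∀ e ∈ M, G.Adj e.1 e.2) ∧ Multiset.card M = t ∧ d = cntF M}

set_option maxHeartbeats 1000000 in
lemma pow_le_span (G : SimpleGraph (Fin n)) (t : ℕ) :
    (edgeIdeal k G) ^ t ≤
      Ideal.span ((fun d => MvPolynomial.monomial d (1 : k)) '' edgeD G t) := by
  induction t with
  | zero =>
    rw [pow_zero, Ideal.one_eq_top]
    refine top_le_iff.mpr ((Ideal.eq_top_iff_one _).mpr (Ideal.subset_span ?_))
    exact ⟨0, ⟨0, by simp, rfl, cntF_zero.symm⟩, by simp⟩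
  | succ t ih =>
    rw [pow_succ]
    calc (edgeIdeal k G) ^ t * edgeIdeal k G
        ≤ Ideal.span ((fun d => MvPolynomial.monomial d (1 : k)) '' edgeD G t) *
            Ideal.span {p | ∃ i j : Fin n, G.Adj i j ∧ p = X i * X j} :=
          Ideal.mul_mono ih le_rfl
      _ = Ideal.span (((fun d => MvPolynomial.monomial d (1 : k)) '' edgeD G t) *
            {p | ∃ i j : Fin n, G.Adj i j ∧ p = X i * X j}) := Ideal.span_mul_span' _ _
      _ ≤ Ideal.span ((fun d => MvPolynomial.monomial d (1 : k)) '' edgeD G (t + 1)) := by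
          refine Ideal.span_mono (Set.mul_subset_iff.mpr ?_)
          rintro _ ⟨d, ⟨M, hadj, hcard, rfl⟩, rfl⟩ _ ⟨i, j, hij, rfl⟩
          refine ⟨Finsupp.single i 1 + Finsupp.single j 1 + cntF M,
            ⟨(i, j) ::ₘ M, ?_, by simp [hcard], (cntF_cons (i, j) M).symm⟩, ?_⟩
          · intro e he
            rcases Multiset.mem_cons.mp he with rfl | he
            · exact hij
            · exact hadj e he
          · simp only [X_mul_X, MvPolynomial.monomial_mul, one_mul]
            rw [add_comm]

lemma monA_add_single (a : Fin n → ℕ) (i : Fin n) :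
    monA k (a + Pi.single i 1) = X i * monA k a := by
  have h1 : ∀ v : Fin n, (X v : MvPolynomial (Fin n) k) ^ (a + Pi.single i 1 : Fin n → ℕ) v
      = X v ^ a v * X v ^ (Pi.single i 1 : Fin n → ℕ) v := by
    intro v
    rw [Pi.add_apply, pow_add]
  rw [monA, monA, Finset.prod_congr rfl fun v _ => h1 v, Finset.prod_mul_distrib, mul_comm]
  congr 1
  rw [Finset.prod_eq_single i (fun v _ hv => by rw [Pi.single_eq_of_ne hv, pow_zero])
    (fun h => absurd (Finset.mem_univ i) h), Pi.single_eq_same, pow_one]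

lemma monA_mem_pow_iff (G : SimpleGraph (Fin n)) (b : Fin n → ℕ) (t : ℕ) :
    monA k b ∈ (edgeIdeal k G) ^ t ↔
      ∃ M : Multiset (Fin n × Fin n), IsWMatching G b M ∧ Multiset.card M = t := by
  classical
  constructor
  · intro h
    have h2 := pow_le_span (k := k) G t h
    rw [monA_eq, MvPolynomial.mem_ideal_span_monomial_image] at h2
    have hs : (Finsupp.equivFunOnFinite.symm b) ∈
        (MvPolynomial.monomial (Finsupp.equivFunOnFinite.symm b) (1 : k)).support := by
      rw [MvPolynomial.support_monomial]
      simp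
    obtain ⟨d, ⟨M, hadj, hcard, rfl⟩, hle⟩ := h2 _ hs
    refine ⟨M, ⟨hadj, fun i => ?_⟩, hcard⟩
    have := Finsupp.le_def.mp hle i
    rwa [cntF_apply, Finsupp.coe_equivFunOnFinite_symm] at this
  · rintro ⟨M, ⟨hadj, hcnt⟩, rfl⟩
    have hle : cntF M ≤ Finsupp.equivFunOnFinite.symm b := by
      refine Finsupp.le_def.mpr fun i => ?_
      rw [cntF_apply, Finsupp.coe_equivFunOnFinite_symm]
      exact hcnt i
    have heq : monA k b = MvPolynomial.monomial (cntF M) (1 : k) *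
        MvPolynomial.monomial (Finsupp.equivFunOnFinite.symm b - cntF M) 1 := by
      rw [monA_eq, MvPolynomial.monomial_mul, one_mul, add_tsub_cancel_of_le hle]
    rw [heq]
    refine Ideal.mul_mem_right _ _ ?_
    have hp := prod_mem_pow (k := k) G M hadj
    rwa [prod_eq_monomial] at hp

lemma wNu_set_nonempty (G : SimpleGraph (Fin n)) (b : Fin n → ℕ) :
    {m : ℕ | ∃ M : Multiset (Fin n × Fin n), IsWMatching G b M ∧ Multiset.card M = m}.Nonempty := by
  refine ⟨0, (0 : Multiset (Fin n × Fin n)), ⟨?_, ?_⟩, rfl⟩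
  · intro e he
    exact absurd he (Multiset.notMem_zero e)
  · intro i
    simp

lemma wNu_set_bddAbove (G : SimpleGraph (Fin n)) (b : Fin n → ℕ) :
    BddAbove {m : ℕ | ∃ M : Multiset (Fin n × Fin n),
      IsWMatching G b M ∧ Multiset.card M = m} := by
  refine ⟨∑ i : Fin n, b i, ?_⟩
  rintro m ⟨M, ⟨hadj, hcnt⟩, rfl⟩
  have h1 : Multiset.card M = Multiset.card (M.map Prod.fst) := (Multiset.card_map _ _).symm
  have h2 : Multiset.card (M.map Prod.fst) = ∑ i : Fin n, (M.map Prod.fst).count i := by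
    rw [← Multiset.toFinset_sum_count_eq (M.map Prod.fst)]
    refine Finset.sum_subset (Finset.subset_univ _) fun x _ hx => ?_
    rw [Multiset.count_eq_zero]
    exact fun hmem => hx (Multiset.mem_toFinset.mpr hmem)
  rw [h1, h2]
  exact Finset.sum_le_sum fun i _ => le_trans (Nat.le_add_right _ _) (hcnt i)

lemma card_le_wNu (G : SimpleGraph (Fin n)) (b : Fin n → ℕ)
    (M : Multiset (Fin n × Fin n)) (h : IsWMatching G b M) :
    Multiset.card M ≤ wNu G b :=
  le_csSup (wNu_set_bddAbove G b) ⟨M, h, rfl⟩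

lemma wNu_attained (G : SimpleGraph (Fin n)) (b : Fin n → ℕ) :
    ∃ M : Multiset (Fin n × Fin n), IsWMatching G b M ∧ Multiset.card M = wNu G b :=
  Nat.sSup_mem (wNu_set_nonempty G b) (wNu_set_bddAbove G b)

lemma maxIdeal_eq_ker :
    maxIdeal k (Fin n) =
      RingHom.ker (MvPolynomial.constantCoeff : MvPolynomial (Fin n) k →+* k) := by
  ext f
  rw [maxIdeal, ← Set.image_univ, MvPolynomial.mem_ideal_span_X_image, RingHom.mem_ker,
    MvPolynomial.constantCoeff_eq]
  constructor
  · intro h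
    by_contra h0
    have : (0 : Fin n →₀ ℕ) ∈ f.support := MvPolynomial.mem_support_iff.mpr h0
    obtain ⟨i, _, hi⟩ := h 0 this
    exact hi rfl
  · intro h0 m hm
    have hm0 : m ≠ 0 := by
      rintro rfl
      exact (MvPolynomial.mem_support_iff.mp hm) h0
    obtain ⟨i, hi⟩ := Finsupp.ne_iff.mp hm0
    exact ⟨i, Set.mem_univ i, by simpa using hi⟩

lemma maxIdeal_isMaximal : (maxIdeal k (Fin n)).IsMaximal := by
  rw [maxIdeal_eq_ker]
  exact RingHom.ker_isMaximal_of_surjective _ fun r =>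
    ⟨MvPolynomial.C r, MvPolynomial.constantCoeff_C _ r⟩

end Aux

/-- if the support of `a` is dominating, `Γ_a` has no isolated vertices
and `ν(Γ_{a-e_i}) = ν(Γ_a) = t - 1` for all supported `i`, then
`x^a ∈ (I^t : m) \ I^t`; in particular `m ∈ Ass(R/I^t)`. -/
theorem stmt_4 {k : Type*} [Field k] {n : ℕ} (G : SimpleGraph (Fin n))
    (a : Fin n → ℕ) (t : ℕ) (ht : 1 ≤ t)
    (hdom : IsDominating G {i | a i ≠ 0})
    (hiso : ∀ i, a i ≠ 0 → ∃ j, a j ≠ 0 ∧ G.Adj i j)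
    (hnu : wNu G a = t - 1)
    (hcrit : ∀ i, a i ≠ 0 → wNu G (a - Pi.single i 1) = t - 1) :
    (monA k a ∈ Submodule.colon ((edgeIdeal k G) ^ t) (maxIdeal k (Fin n)) ∧
      monA k a ∉ (edgeIdeal k G) ^ t) ∧
    maxIdeal k (Fin n) ∈ associatedPrimes (MvPolynomial (Fin n) k)
      (MvPolynomial (Fin n) k ⧸ (edgeIdeal k G) ^ t) := by
  -- x^a ∉ I^t
  have hnotmem : monA k a ∉ (edgeIdeal k G) ^ t := by
    intro h
    obtain ⟨M, hM, hMcard⟩ := (monA_mem_pow_iff G a t).mp h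
    have := card_le_wNu G a M hM
    rw [hMcard, hnu] at this
    omega
  -- X i * x^a ∈ I^t for every i
  have key : ∀ i : Fin n, (X i : MvPolynomial (Fin n) k) * monA k a ∈ (edgeIdeal k G) ^ t := by
    intro i
    -- find a neighbor j of i with a j ≠ 0
    obtain ⟨j, hj, hij⟩ : ∃ j, a j ≠ 0 ∧ G.Adj i j := by
      by_cases hi : a i ≠ 0
      · exact hiso i hi
      · rcases hdom i with h | ⟨u, hu, hadj⟩
        · exact absurd h hi
        · exact ⟨u, hu, hadj⟩
    have hne : i ≠ j := hij.ne
    obtain ⟨M, hM, hMcard⟩ := wNu_attained G (a - Pi.single j 1)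
    rw [hcrit j hj] at hMcard
    -- the augmented matching
    set M' : Multiset (Fin n × Fin n) := (i, j) ::ₘ M with hM'
    have hmatch : IsWMatching G (a + Pi.single i 1) M' := by
      constructor
      · intro e he
        rcases Multiset.mem_cons.mp he with rfl | he
        · exact hij
        · exact hM.1 e he
      · intro v
        have h1 := hM.2 v
        have hsub : (a - Pi.single j 1 : Fin n → ℕ) v = a v - (if v = j then 1 else 0) := by
          by_cases hvj : v = j <;> simp [hvj, Pi.single_apply]
        rw [hsub] at h1
        have hg2 : (a + Pi.single i 1 : Fin n → ℕ) v = a v + (if v = i then 1 else 0) := by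
          by_cases hvi : v = i <;> simp [hvi, Pi.single_apply]
        have hc1 : Multiset.count v (Multiset.map Prod.fst ((i, j) ::ₘ M)) =
            Multiset.count v (Multiset.map Prod.fst M) + (if v = i then 1 else 0) := by
          rw [Multiset.map_cons, Multiset.count_cons]
        have hc2 : Multiset.count v (Multiset.map Prod.snd ((i, j) ::ₘ M)) =
            Multiset.count v (Multiset.map Prod.snd M) + (if v = j then 1 else 0) := by
          rw [Multiset.map_cons, Multiset.count_cons]
        rw [hM', hc1, hc2, hg2]
        have hF2 : (if v = j then 1 else 0) ≤ a v := by
          by_cases hvj : v = j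
          · rw [if_pos hvj, hvj]
            exact Nat.one_le_iff_ne_zero.mpr hj
          · rw [if_neg hvj]
            exact Nat.zero_le _
        omega
    have hcard' : Multiset.card M' = t := by
      rw [hM', Multiset.card_cons, hMcard]
      omega
    have hmem : monA k (a + Pi.single i 1) ∈ (edgeIdeal k G) ^ t :=
      (monA_mem_pow_iff G _ t).mpr ⟨M', hmatch, hcard'⟩
    have heq : monA k (a + Pi.single i 1) = X i * monA k a := monA_add_single a i
    rw [← heq]
    exact hmem
  -- x^a ∈ (I^t : m)
  have hcolon : monA k a ∈ Submodule.colon ((edgeIdeal k G) ^ t) (maxIdeal k (Fin n)) := by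
    rw [Submodule.mem_colon]
    intro p hp
    have hle : maxIdeal k (Fin n) ≤ Submodule.comap
        (LinearMap.toSpanSingleton (MvPolynomial (Fin n) k) (MvPolynomial (Fin n) k)
          (monA k a)) ((edgeIdeal k G) ^ t) := by
      rw [maxIdeal, Ideal.span, Submodule.span_le]
      rintro _ ⟨i, rfl⟩
      simpa [LinearMap.toSpanSingleton_apply, smul_eq_mul] using key i
    simpa [LinearMap.toSpanSingleton_apply, smul_eq_mul, mul_comm] using hle hp
  refine ⟨⟨hcolon, hnotmem⟩, ?_⟩
  -- the associated prime part
  have hmax : (maxIdeal k (Fin n)).IsMaximal := maxIdeal_isMaximal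
  set xbar : MvPolynomial (Fin n) k ⧸ (edgeIdeal k G) ^ t :=
    Ideal.Quotient.mk ((edgeIdeal k G) ^ t) (monA k a) with hxbar
  have hle : maxIdeal k (Fin n) ≤
      (Submodule.span (MvPolynomial (Fin n) k) {xbar}).annihilator := by
    intro r hr
    rw [Submodule.mem_annihilator_span_singleton, hxbar]
    have hmem := Submodule.mem_colon.mp hcolon r hr
    rw [smul_eq_mul] at hmem
    have h2 : r • (Ideal.Quotient.mk ((edgeIdeal k G) ^ t)) (monA k a) =
        (Ideal.Quotient.mk ((edgeIdeal k G) ^ t)) (r * monA k a) := rfl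
    rw [h2, Ideal.Quotient.eq_zero_iff_mem]
    rwa [mul_comm] at hmem
  have hne : (Submodule.span (MvPolynomial (Fin n) k) {xbar}).annihilator ≠ ⊤ := by
    intro h
    have h1 : (1 : MvPolynomial (Fin n) k) ∈
        (Submodule.span (MvPolynomial (Fin n) k) {xbar}).annihilator := by
      rw [h]; trivial
    rw [Submodule.mem_annihilator_span_singleton, one_smul, hxbar,
      Ideal.Quotient.eq_zero_iff_mem] at h1
    exact hnotmem h1
  have hc : (⊥ : Submodule (MvPolynomial (Fin n) k) (MvPolynomial (Fin n) k ⧸ (edgeIdeal k G) ^ t)).colon {xbar} =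
      (Submodule.span (MvPolynomial (Fin n) k) {xbar}).annihilator := by
    ext r
    rw [Submodule.mem_colon_singleton, Submodule.mem_bot, Submodule.mem_annihilator_span_singleton]
  refine ⟨hmax.isPrime, xbar, hmax.eq_of_le ?_ ?_⟩
  · rw [hc, Ne, Ideal.radical_eq_top]
    exact hne
  · rw [hc]
    exact hle.trans Ideal.le_radical
end

section
/- Let F be a non-minimal vertex cover of Γ and let c(F) = F \ N[V \ F] be its core. A subset U ⊆ V is a dominating set of the induced subgraph Γ_{c(F)} if and only if F is minimal among the vertex covers of Γ containing N[U] (that is, N[U] ⊆ F and for every i ∈ F \ N[U], F \ {i} is not a vertex cover of Γ). -/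
open MvPolynomial

/-- for a non-minimal cover `F` with core `c(F)`, a set `U` dominates
`Γ_{c(F)}` iff `F` is minimal among the covers containing `N[U]`. -/
theorem stmt_14 {V : Type*} (G : SimpleGraph V) (F : Set V) (hF : IsCover G F)
    (hnm : ∃ i ∈ F, IsCover G (F \ {i})) (U : Set V) :
    (U ⊆ core G F ∧ ∀ x ∈ core G F, x ∈ U ∨ ∃ u ∈ U, G.Adj x u) ↔
      (closedNbhd G U ⊆ F ∧
        ∀ i ∈ F, i ∉ closedNbhd G U → ¬ IsCover G (F \ {i})) := by
  constructor
  · rintro ⟨hU, hdom⟩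
    constructor
    · rintro v (hv | ⟨u, hu, hadj⟩)
      · exact (hU hv).1
      · exact (hU hu).2 v hadj.symm
    · intro i hi hni hcov
      have hic : i ∈ core G F := by
        by_contra hic
        simp only [core, Set.mem_setOf_eq] at hic
        push_neg at hic
        obtain ⟨j, hij, hjF⟩ := hic hi
        rcases hcov hij with h | h
        · exact h.2 rfl
        · exact hjF h.1
      rcases hdom i hic with h | ⟨u, hu, hadj⟩
      · exact hni (Or.inl h)
      · exact hni (Or.inr ⟨u, hu, hadj⟩)
  · rintro ⟨hN, hmin⟩
    constructor
    · intro u hu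
      exact ⟨hN (Or.inl hu), fun j hadj => hN (Or.inr ⟨u, hu, hadj.symm⟩)⟩
    · intro x hx
      by_contra hc
      push_neg at hc
      have hxN : x ∉ closedNbhd G U := by
        rintro (h | ⟨u, hu, hadj⟩)
        · exact hc.1 h
        · exact hc.2 u hu hadj
      apply hmin x hx.1 hxN
      intro i j hij
      rcases hF hij with h | h
      · by_cases hix : i = x
        · subst hix
          exact Or.inr ⟨hx.2 j hij, fun hjx => G.loopless.irrefl i (hjx ▸ hij)⟩
        · exact Or.inl ⟨h, hix⟩
      · by_cases hjx : j = x
        · subst hjx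
          exact Or.inl ⟨hx.2 i hij.symm, fun hix => G.loopless.irrefl j (hix ▸ hij.symm)⟩
        · exact Or.inr ⟨h, hjx⟩
end
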